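/- (Second Griffiths / Kelly–Sherman inequality.) Let Λ be a nonempty finite set, β ≥ 0, and let J assign to every subset A ⊆ Λ a nonnegative real J_A ≥ 0. Define the Gibbs expectation with weights exp(β·Σ_{A⊆Λ} J_A σ_A) over spin configurations σ : Λ → {−1, +1}. Then for all subsets B, C ⊆ Λ: ⟨σ_B σ_C⟩ − ⟨σ_B⟩⟨σ_C⟩ ≥ 0. -/

import Mathlib

open Finset

/-- The spin value (±1) associated to a Boolean configuration. -/
noncomputable def spin {Λ : Type*} (s : Λ → Bool) : Λ → ℝ :=
  fun p => if s p then 1 else -1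

/-- Boltzmann weight for a general many-body ferromagnetic interaction:
`exp(β·Σ_{A⊆Λ} J_A σ_A)`. -/
noncomputable def griffWeight {Λ : Type*} [Fintype Λ] [DecidableEq Λ]
    (β : ℝ) (J : Finset Λ → ℝ) (s : Λ → Bool) : ℝ :=
  Real.exp (β * ∑ A : Finset Λ, J A * ∏ p ∈ A, spin s p)

/-- Gibbs expectation for a general many-body interaction. -/
noncomputable def griffExpect {Λ : Type*} [Fintype Λ] [DecidableEq Λ]
    (β : ℝ) (J : Finset Λ → ℝ) (f : (Λ → ℝ) → ℝ) : ℝ :=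
  (∑ s : Λ → Bool, f (spin s) * griffWeight β J s) / ∑ s : Λ → Bool, griffWeight β J s


open scoped symmDiff

namespace GriffAux

variable {Λ : Type*} [Fintype Λ] [DecidableEq Λ]

noncomputable def χ (A : Finset Λ) (s : Λ → Bool) : ℝ := ∏ p ∈ A, spin s p

lemma spin_sq (s : Λ → Bool) (p : Λ) : spin s p * spin s p = 1 := by
  cases h : s p <;> simp [spin, h]

lemma chi_sq (A : Finset Λ) (s : Λ → Bool) : χ A s * χ A s = 1 := by
  rw [χ, ← Finset.prod_mul_distrib]
  simp [spin_sq]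

lemma chi_eq_or (A : Finset Λ) (s : Λ → Bool) : χ A s = 1 ∨ χ A s = -1 :=
  mul_self_eq_one_iff.mp (chi_sq A s)

lemma chi_le_one (A : Finset Λ) (s : Λ → Bool) : χ A s ≤ 1 := by
  rcases chi_eq_or A s with h | h <;> rw [h] <;> norm_num

lemma neg_one_le_chi (A : Finset Λ) (s : Λ → Bool) : -1 ≤ χ A s := by
  rcases chi_eq_or A s with h | h <;> rw [h] <;> norm_num

lemma chi_mul (A B : Finset Λ) (s : Λ → Bool) : χ A s * χ B s = χ (A ∆ B) s := by
  have hA : χ A s = (∏ p ∈ A \ B, spin s p) * ∏ p ∈ A ∩ B, spin s p := by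
    rw [χ, ← Finset.prod_union (Finset.disjoint_sdiff_inter A B), Finset.sdiff_union_inter]
  have hB : χ B s = (∏ p ∈ B \ A, spin s p) * ∏ p ∈ A ∩ B, spin s p := by
    rw [Finset.inter_comm, χ, ← Finset.prod_union (Finset.disjoint_sdiff_inter B A),
      Finset.sdiff_union_inter]
  have hAB : χ (A ∆ B) s = (∏ p ∈ A \ B, spin s p) * ∏ p ∈ B \ A, spin s p := by
    rw [χ, symmDiff_def, Finset.sup_eq_union, Finset.prod_union (disjoint_sdiff_sdiff)]
  have hsq : (∏ p ∈ A ∩ B, spin s p) * (∏ p ∈ A ∩ B, spin s p) = 1 := by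
    rw [← Finset.prod_mul_distrib]; simp [spin_sq]
  rw [hA, hB, hAB]
  linear_combination (∏ p ∈ A \ B, spin s p) * (∏ p ∈ B \ A, spin s p) * hsq

lemma exists_chi (S : Finset (Finset Λ)) (D : Finset Λ) :
    ∃ E : Finset Λ, ∀ s : Λ → Bool, χ D s * ∏ A ∈ S, χ A s = χ E s := by
  classical
  induction S using Finset.induction_on with
  | empty => exact ⟨D, by simp⟩
  | insert a S' h ih =>
    obtain ⟨E, hE⟩ := ih
    refine ⟨a ∆ E, fun s => ?_⟩
    rw [Finset.prod_insert h, show χ D s * (χ a s * ∏ A ∈ S', χ A s)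
        = χ a s * (χ D s * ∏ A ∈ S', χ A s) by ring, hE s, chi_mul]

lemma sum_chi_nonneg (E : Finset Λ) : 0 ≤ ∑ s : Λ → Bool, χ E s := by
  classical
  have h1 : ∑ s : Λ → Bool, χ E s
      = ∑ s ∈ Fintype.piFinset (fun _ : Λ => (Finset.univ : Finset Bool)),
          ∏ p, (if p ∈ E then spin s p else 1) := by
    rw [Fintype.piFinset_univ]
    refine Finset.sum_congr rfl fun s _ => ?_
    rw [Finset.prod_ite_mem, Finset.univ_inter, χ]
  have h2 : ∑ s ∈ Fintype.piFinset (fun _ : Λ => (Finset.univ : Finset Bool)),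
        ∏ p, (if p ∈ E then spin s p else 1)
      = ∏ p : Λ, ∑ b : Bool, (if p ∈ E then (if b then (1:ℝ) else -1) else 1) := by
    rw [Finset.prod_univ_sum]
    refine Finset.sum_congr rfl fun s _ => Finset.prod_congr rfl fun p _ => ?_
    by_cases hp : p ∈ E <;> simp [hp, spin]
  rw [h1, h2]
  apply Finset.prod_nonneg
  intro p _
  by_cases hp : p ∈ E <;> simp [hp] <;> norm_num

lemma griffI (K : Finset Λ → ℝ) (hK : ∀ A, 0 ≤ K A) (D : Finset Λ) :
    0 ≤ ∑ s : Λ → Bool, χ D s * Real.exp (∑ A : Finset Λ, K A * χ A s) := by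
  classical
  have hexp : ∀ s : Λ → Bool, Real.exp (∑ A : Finset Λ, K A * χ A s)
      = ∑ S ∈ (Finset.univ : Finset (Finset Λ)).powerset,
          ((∏ A ∈ S, Real.sinh (K A)) * ∏ A ∈ Finset.univ \ S, Real.cosh (K A))
            * ∏ A ∈ S, χ A s := by
    intro s
    rw [Real.exp_sum]
    have h1 : ∀ A ∈ (Finset.univ : Finset (Finset Λ)),
        Real.exp (K A * χ A s) = Real.sinh (K A) * χ A s + Real.cosh (K A) := by
      intro A _
      rcases chi_eq_or A s with h | h <;> rw [h]
      · rw [mul_one, mul_one, add_comm, Real.cosh_add_sinh]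
      · rw [mul_neg_one, mul_neg_one, neg_add_eq_sub, Real.cosh_sub_sinh]
    rw [Finset.prod_congr rfl h1, Finset.prod_add]
    refine Finset.sum_congr rfl fun S _ => ?_
    rw [Finset.prod_mul_distrib]
    ring
  calc (0:ℝ) ≤ ∑ S ∈ (Finset.univ : Finset (Finset Λ)).powerset,
        ((∏ A ∈ S, Real.sinh (K A)) * ∏ A ∈ Finset.univ \ S, Real.cosh (K A))
          * ∑ s : Λ → Bool, χ D s * ∏ A ∈ S, χ A s := by
        apply Finset.sum_nonneg
        intro S _
        apply mul_nonneg
        · exact mul_nonneg (Finset.prod_nonneg fun A _ => (by rw [← Real.sinh_zero]; exact Real.sinh_le_sinh.mpr (hK A)))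
            (Finset.prod_nonneg fun A _ => (Real.cosh_pos _).le)
        · obtain ⟨E, hE⟩ := exists_chi S D
          simp_rw [hE]
          exact sum_chi_nonneg E
    _ = ∑ s : Λ → Bool, χ D s * Real.exp (∑ A : Finset Λ, K A * χ A s) := by
        simp_rw [hexp, Finset.mul_sum]
        rw [Finset.sum_comm]
        refine Finset.sum_congr rfl fun s _ => Finset.sum_congr rfl fun S _ => by ring


lemma spin_mulpt (s q : Λ → Bool) (p : Λ) :
    spin (fun r => s r == q r) p = spin s p * spin q p := by
  cases hs : s p <;> cases hq : q p <;> simp [spin, hs, hq]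

lemma chi_mulpt (A : Finset Λ) (s q : Λ → Bool) :
    χ A (fun r => s r == q r) = χ A s * χ A q := by
  rw [χ, χ, χ, ← Finset.prod_mul_distrib]
  exact Finset.prod_congr rfl fun p _ => spin_mulpt s q p

end GriffAux

open GriffAux


open scoped symmDiff
/-- **Second Griffiths (Kelly–Sherman) inequality**:
`⟨σ_B σ_C⟩ − ⟨σ_B⟩⟨σ_C⟩ ≥ 0` for ferromagnetic many-body interactions. -/
theorem griffiths_second_inequality {Λ : Type*} [Fintype Λ] [DecidableEq Λ] [Nonempty Λ]
    (β : ℝ) (hβ : 0 ≤ β) (J : Finset Λ → ℝ) (hJ : ∀ A : Finset Λ, 0 ≤ J A)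
    (B C : Finset Λ) :
    0 ≤ griffExpect β J (fun σ => (∏ p ∈ B, σ p) * ∏ p ∈ C, σ p) -
        griffExpect β J (fun σ => ∏ p ∈ B, σ p) *
          griffExpect β J (fun σ => ∏ p ∈ C, σ p) := by
  classical
  set W := griffWeight β J with hW
  have hWpos : ∀ s : Λ → Bool, 0 < W s := fun s => Real.exp_pos _
  set Z := ∑ s : Λ → Bool, W s with hZ
  have hZpos : 0 < Z :=
    Finset.sum_pos (fun s _ => hWpos s) ⟨fun _ => true, Finset.mem_univ _⟩
  set a := ∑ s : Λ → Bool, χ B s * χ C s * W s with ha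
  set b := ∑ s : Λ → Bool, χ B s * W s with hb
  set c := ∑ s : Λ → Bool, χ C s * W s with hc
  have e1 : griffExpect β J (fun σ => (∏ p ∈ B, σ p) * ∏ p ∈ C, σ p) = a / Z := rfl
  have e2 : griffExpect β J (fun σ => ∏ p ∈ B, σ p) = b / Z := rfl
  have e3 : griffExpect β J (fun σ => ∏ p ∈ C, σ p) = c / Z := rfl
  -- the key positivity, via duplicated variables
  have main : ∀ q : Λ → Bool, 0 ≤ ∑ s : Λ → Bool,
      (χ B s * χ C s * W s * W (fun p => s p == q p)
        - χ B s * W s * (χ C (fun p => s p == q p) * W (fun p => s p == q p))) := by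
    intro q
    set K : Finset Λ → ℝ := fun A => β * J A * (1 + χ A q) with hKdef
    have hKnn : ∀ A, 0 ≤ K A := fun A =>
      mul_nonneg (mul_nonneg hβ (hJ A)) (by linarith [neg_one_le_chi A q])
    have hterm : ∀ s : Λ → Bool,
        χ B s * χ C s * W s * W (fun p => s p == q p)
          - χ B s * W s * (χ C (fun p => s p == q p) * W (fun p => s p == q p))
        = (1 - χ C q) * (χ (B ∆ C) s * Real.exp (∑ A : Finset Λ, K A * χ A s)) := by
      intro s
      have hWW : W s * W (fun p => s p == q p)
          = Real.exp (∑ A : Finset Λ, K A * χ A s) := by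
        rw [hW, griffWeight, griffWeight, ← Real.exp_add]
        congr 1
        rw [Finset.mul_sum, Finset.mul_sum, ← Finset.sum_add_distrib]
        refine Finset.sum_congr rfl fun A _ => ?_
        show β * (J A * χ A s) + β * (J A * χ A (fun p => s p == q p)) = K A * χ A s
        rw [chi_mulpt, hKdef]; ring
      have h2 : χ B s * χ C s = χ (B ∆ C) s := chi_mul B C s
      rw [chi_mulpt]
      linear_combination (χ B s * χ C s - χ B s * (χ C s * χ C q)) * hWW
        + (1 - χ C q) * Real.exp (∑ A : Finset Λ, K A * χ A s) * h2
    simp_rw [hterm]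
    rw [← Finset.mul_sum]
    exact mul_nonneg (by linarith [chi_le_one C q]) (griffI K hKnn (B ∆ C))
  have key : 0 ≤ a * Z - b * c := by
    have expand : a * Z - b * c = ∑ q : Λ → Bool, ∑ s : Λ → Bool,
        (χ B s * χ C s * W s * W (fun p => s p == q p)
          - χ B s * W s * (χ C (fun p => s p == q p) * W (fun p => s p == q p))) := by
      rw [ha, hb, hc, hZ, Finset.sum_mul_sum, Finset.sum_mul_sum, ← Finset.sum_sub_distrib]
      rw [Finset.sum_comm]
      refine Finset.sum_congr rfl fun s _ => ?_
      rw [← Finset.sum_sub_distrib]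
      have hinv : Function.Involutive (fun q : Λ → Bool => fun p => s p == q p) := by
        intro q; funext p; cases hs : s p <;> cases hq : q p <;> simp [hs, hq]
      exact (Fintype.sum_bijective _ hinv.bijective _ _ fun q => rfl).symm
    rw [expand]
    exact Finset.sum_nonneg fun q _ => main q
  rw [e1, e2, e3]
  have hrw : a / Z - b / Z * (c / Z) = (a * Z - b * c) / (Z * Z) := by
    field_simp
  rw [hrw]
  exact div_nonneg key (mul_pos hZpos hZpos).le
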